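/- Let λ, μ, ν > 0. With ∇ the unique ℝ-bilinear map satisfying the Koszul formula for (V, h, [·,·]) and R(A,B)C := ∇_A(∇_B C) − ∇_B(∇_A C) − ∇_{[A,B]} C, the Lorentzian dual space satisfies h(R(X,Y)Y, X) = ((λ²−μ²+ν²)² + 4ν²(μ²−ν²))/(λμν)², h(R(X,Z)Z, X) = ((λ²+μ²−ν²)² − 4μ²(μ²−ν²))/(λμν)², and h(R(Y,Z)Z, Y) = −((λ²+μ²+ν²)² − 4(λ⁴+μ²ν²))/(λμν)². -/
import Mathlib


/-- The Lorentzian scalar product on `ℝ³` with `h(X,X) = −1`, `h(Y,Y) = h(Z,Z) = 1`. -/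
def hLor (v w : Fin 3 → ℝ) : ℝ := -(v 0 * w 0) + v 1 * w 1 + v 2 * w 2

set_option maxHeartbeats 1600000 in
theorem sectional_curvature_lorentzian_dual_space
    (l m n : ℝ) (hl : 0 < l) (hm : 0 < m) (hn : 0 < n)
    (X Y Z : Fin 3 → ℝ) (hX : X = ![1, 0, 0]) (hY : Y = ![0, 1, 0]) (hZ : Z = ![0, 0, 1])
    (bracket : (Fin 3 → ℝ) →ₗ[ℝ] (Fin 3 → ℝ) →ₗ[ℝ] (Fin 3 → ℝ))
    (halt : ∀ v, bracket v v = 0)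
    (hXY : bracket X Y = (2 * n / (l * m)) • Z)
    (hZX : bracket Z X = (2 * m / (l * n)) • Y)
    (hYZ : bracket Y Z = -((2 * l / (m * n)) • X))
    (nabla : (Fin 3 → ℝ) →ₗ[ℝ] (Fin 3 → ℝ) →ₗ[ℝ] (Fin 3 → ℝ))
    (hKoszul : ∀ A B C, 2 * hLor (nabla A B) C =
      hLor C (bracket A B) + hLor B (bracket C A) - hLor A (bracket B C))
    (R : (Fin 3 → ℝ) → (Fin 3 → ℝ) → (Fin 3 → ℝ) → (Fin 3 → ℝ))
    (hR : ∀ A B C, R A B C = nabla A (nabla B C) - nabla B (nabla A C) - nabla (bracket A B) C) :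
    hLor (R X Y Y) X = ((l ^ 2 - m ^ 2 + n ^ 2) ^ 2 + 4 * n ^ 2 * (m ^ 2 - n ^ 2)) / (l * m * n) ^ 2 ∧
    hLor (R X Z Z) X = ((l ^ 2 + m ^ 2 - n ^ 2) ^ 2 - 4 * m ^ 2 * (m ^ 2 - n ^ 2)) / (l * m * n) ^ 2 ∧
    hLor (R Y Z Z) Y = -(((l ^ 2 + m ^ 2 + n ^ 2) ^ 2 - 4 * (l ^ 4 + m ^ 2 * n ^ 2)) / (l * m * n) ^ 2) := by
  have hanti : ∀ v w, bracket w v = -(bracket v w) := by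
    intro v w
    have h := halt (v + w)
    simp only [map_add, LinearMap.add_apply, halt v, halt w, zero_add, add_zero] at h
    exact eq_neg_of_add_eq_zero_left h
  subst hX hY hZ
  have hYX := hanti ![1,0,0] ![0,1,0]; rw [hXY] at hYX
  have hXZ := hanti ![0,0,1] ![1,0,0]; rw [hZX] at hXZ
  have hZY := hanti ![0,1,0] ![0,0,1]; rw [hYZ] at hZY
  have bXX := halt ![(1:ℝ),0,0]
  have bYY := halt ![(0:ℝ),1,0]
  have bZZ := halt ![(0:ℝ),0,1]
  have nYY : nabla ![0,1,0] ![0,1,0] = (0 : Fin 3 → ℝ) := by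
    have e0 := hKoszul ![0,1,0] ![0,1,0] ![1,0,0]
    have e1 := hKoszul ![0,1,0] ![0,1,0] ![0,1,0]
    have e2 := hKoszul ![0,1,0] ![0,1,0] ![0,0,1]
    simp [hLor, hXY, hYX, hXZ, hZX, hYZ, hZY, bXX, bYY, bZZ] at e0 e1 e2
    funext i
    fin_cases i <;> simp <;> linarith
  have nZZ : nabla ![0,0,1] ![0,0,1] = (0 : Fin 3 → ℝ) := by
    have e0 := hKoszul ![0,0,1] ![0,0,1] ![1,0,0]
    have e1 := hKoszul ![0,0,1] ![0,0,1] ![0,1,0]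
    have e2 := hKoszul ![0,0,1] ![0,0,1] ![0,0,1]
    simp [hLor, hXY, hYX, hXZ, hZX, hYZ, hZY, bXX, bYY, bZZ] at e0 e1 e2
    funext i
    fin_cases i <;> simp <;> linarith
  have nXY : nabla ![1,0,0] ![0,1,0] = ((2*n/(l*m) + 2*m/(l*n) - 2*l/(m*n))/2) • ![(0:ℝ),0,1] := by
    have e0 := hKoszul ![1,0,0] ![0,1,0] ![1,0,0]
    have e1 := hKoszul ![1,0,0] ![0,1,0] ![0,1,0]
    have e2 := hKoszul ![1,0,0] ![0,1,0] ![0,0,1]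
    simp [hLor, hXY, hYX, hXZ, hZX, hYZ, hZY, bXX, bYY, bZZ] at e0 e1 e2
    funext i
    fin_cases i <;> simp <;> linarith
  have nXZ : nabla ![1,0,0] ![0,0,1] = (-((2*n/(l*m) + 2*m/(l*n) - 2*l/(m*n))/2)) • ![(0:ℝ),1,0] := by
    have e0 := hKoszul ![1,0,0] ![0,0,1] ![1,0,0]
    have e1 := hKoszul ![1,0,0] ![0,0,1] ![0,1,0]
    have e2 := hKoszul ![1,0,0] ![0,0,1] ![0,0,1]
    simp [hLor, hXY, hYX, hXZ, hZX, hYZ, hZY, bXX, bYY, bZZ] at e0 e1 e2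
    funext i
    fin_cases i <;> simp <;> linarith
  have nYZ : nabla ![0,1,0] ![0,0,1] = (-((2*n/(l*m) - 2*m/(l*n) + 2*l/(m*n))/2)) • ![(1:ℝ),0,0] := by
    have e0 := hKoszul ![0,1,0] ![0,0,1] ![1,0,0]
    have e1 := hKoszul ![0,1,0] ![0,0,1] ![0,1,0]
    have e2 := hKoszul ![0,1,0] ![0,0,1] ![0,0,1]
    simp [hLor, hXY, hYX, hXZ, hZX, hYZ, hZY, bXX, bYY, bZZ] at e0 e1 e2
    funext i
    fin_cases i <;> simp <;> linarith
  have nZX : nabla ![0,0,1] ![1,0,0] = ((-(2*n/(l*m)) + 2*m/(l*n) + 2*l/(m*n))/2) • ![(0:ℝ),1,0] := by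
    have e0 := hKoszul ![0,0,1] ![1,0,0] ![1,0,0]
    have e1 := hKoszul ![0,0,1] ![1,0,0] ![0,1,0]
    have e2 := hKoszul ![0,0,1] ![1,0,0] ![0,0,1]
    simp [hLor, hXY, hYX, hXZ, hZX, hYZ, hZY, bXX, bYY, bZZ] at e0 e1 e2
    funext i
    fin_cases i <;> simp <;> linarith
  have nZY : nabla ![0,0,1] ![0,1,0] = ((-(2*n/(l*m)) + 2*m/(l*n) + 2*l/(m*n))/2) • ![(1:ℝ),0,0] := by
    have e0 := hKoszul ![0,0,1] ![0,1,0] ![1,0,0]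
    have e1 := hKoszul ![0,0,1] ![0,1,0] ![0,1,0]
    have e2 := hKoszul ![0,0,1] ![0,1,0] ![0,0,1]
    simp [hLor, hXY, hYX, hXZ, hZX, hYZ, hZY, bXX, bYY, bZZ] at e0 e1 e2
    funext i
    fin_cases i <;> simp <;> linarith
  have hl' := hl.ne'
  have hm' := hm.ne'
  have hn' := hn.ne'
  refine ⟨?_, ?_, ?_⟩
  · rw [hR, nYY, hXY, nXY]
    simp only [map_zero, map_smul, LinearMap.smul_apply, nYZ, nZY]
    simp [hLor]
    field_simp
    ring
  · rw [hR, nZZ, hXZ, nXZ]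
    simp only [map_zero, map_smul, LinearMap.smul_apply, map_neg, LinearMap.neg_apply, nZY, nYZ]
    simp [hLor]
    field_simp
    ring
  · rw [hR, nZZ, hYZ, nYZ]
    simp only [map_zero, map_smul, LinearMap.smul_apply, map_neg, LinearMap.neg_apply, nZX, nXZ]
    simp [hLor]
    field_simp
    ring
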